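/- Let p ≥ 3 be a prime and n a positive integer with p² | n. Then the minimal sensitivity of the simplified weighted sum function on n variables is 0, i.e., there exists an input X with Sen(f,X) = 0. -/

import Mathlib

open Finset

/-- the weighted sum `s(X) = (∑ k, k·x_k) mod n`, as an element of `ZMod n`. -/
def wsS {n : ℕ} [NeZero n] (X : ZMod n → Bool) : ZMod n :=
  ∑ i : ZMod n, if X i then i else 0

/-- the simplified weighted sum function `f(X) = x_{s(X)}`. -/
def wsF {n : ℕ} [NeZero n] (X : ZMod n → Bool) : Bool := X (wsS X)

/-- the sensitivity `Sen(f, X)`: the number of coordinates whose flip changes `f`. -/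
def wsSens {n : ℕ} [NeZero n] (X : ZMod n → Bool) : ℕ :=
  (Finset.univ.filter fun i : ZMod n =>
    wsF (Function.update X i (!X i)) ≠ wsF X).card

theorem stmt_1 (p n : ℕ) (hp : p.Prime) (hp3 : 3 ≤ p) (hn : 0 < n) [NeZero n]
    (hdvd : p ^ 2 ∣ n) :
    ∃ X : ZMod n → Bool, wsSens X = 0 := by
  haveI : Fact p.Prime := ⟨hp⟩
  have hp0 : 0 < p := hp.pos
  have hpn : p ∣ n := dvd_trans (dvd_pow_self p two_ne_zero) hdvd
  obtain ⟨t, ht⟩ := hdvd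
  set m : ℕ := p * t with hmdef
  have hnm : n = p * m := by rw [ht, hmdef]; ring
  have hpm : p ∣ m := ⟨t, rfl⟩
  have hm0 : 0 < m := by
    rcases Nat.eq_zero_or_pos m with h | h
    · rw [h, mul_zero] at hnm; omega
    · exact h
  set φ : ZMod n →+* ZMod p := ZMod.castHom hpn (ZMod p) with hφ
  set X : ZMod n → Bool := fun i => decide (φ i = 1) with hX
  refine ⟨X, ?_⟩
  -- the weighted sum as a natural number
  set N : ℕ := p * (∑ j ∈ Finset.range m, j) + m with hN
  -- membership characterization
  have hmem : ∀ k : ℕ, (φ (k : ZMod n) = 1) ↔ k % p = 1 := by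
    intro k
    rw [hφ, map_natCast]
    rw [show (1 : ZMod p) = ((1 : ℕ) : ZMod p) by norm_num]
    rw [ZMod.natCast_eq_natCast_iff']
    rw [Nat.mod_eq_of_lt (by omega : 1 < p)]
  -- computing the weighted sum
  have hsum : wsS X = (N : ZMod n) := by
    have h1 : wsS X = ∑ i : ZMod n, (((if φ i = 1 then i.val else 0 : ℕ)) : ZMod n) := by
      rw [wsS]
      refine Finset.sum_congr rfl fun i _ => ?_
      rcases eq_or_ne (φ i) 1 with h | h
      · simp [hX, h, ZMod.natCast_rightInverse i]
      · simp [hX, h]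
    rw [h1, ← Nat.cast_sum]
    congr 1
    have h2 : ∑ i : ZMod n, (if φ i = 1 then i.val else 0)
        = ∑ k ∈ Finset.range n, (if k % p = 1 then k else 0) := by
      refine Finset.sum_nbij' (fun i => i.val) (fun k => (k : ZMod n)) ?_ ?_ ?_ ?_ ?_
      · intro i _; exact Finset.mem_range.2 (ZMod.val_lt i)
      · intro k _; exact Finset.mem_univ _
      · intro i _; exact ZMod.natCast_rightInverse i
      · intro k hk; exact ZMod.val_cast_of_lt (Finset.mem_range.1 hk)
      · intro i _
        rcases eq_or_ne (φ i) 1 with h | h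
        · rw [if_pos h, if_pos]
          rw [← hmem i.val, ZMod.natCast_rightInverse i]; exact h
        · rw [if_neg h, if_neg]
          rw [← hmem i.val, ZMod.natCast_rightInverse i]; exact h
    rw [h2, ← Finset.sum_filter]
    have h3 : (Finset.range n).filter (fun k => k % p = 1)
        = (Finset.range m).image (fun j => p * j + 1) := by
      ext k
      simp only [Finset.mem_filter, Finset.mem_range, Finset.mem_image]
      constructor
      · rintro ⟨hk, hk1⟩
        have hdm := Nat.div_add_mod k p
        refine ⟨k / p, ?_, ?_⟩
        · rw [Nat.div_lt_iff_lt_mul hp0]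
          have : m * p = p * m := Nat.mul_comm m p
          omega
        · omega
      · rintro ⟨j, hj, rfl⟩
        constructor
        · have h1 : p * (j + 1) ≤ p * m := Nat.mul_le_mul_left p hj
          rw [Nat.mul_succ] at h1
          omega
        · have h2 : (p * j + 1) % p = 1 % p := Nat.mul_add_mod p j 1
          rw [Nat.mod_eq_of_lt (by omega : 1 < p)] at h2
          exact h2
    rw [h3, Finset.sum_image (by
      intro a _ b _ h
      exact Nat.eq_of_mul_eq_mul_left hp0 (by simp only at h; omega))]
    rw [hN]
    rw [Finset.sum_add_distrib, Finset.sum_const, ← Finset.mul_sum]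
    simp [Finset.card_range]
  have hpN : p ∣ N := by
    rw [hN]; exact Nat.dvd_add (Dvd.intro _ rfl) hpm
  have hnN : ¬ n ∣ N := by
    rintro ⟨c, hc⟩
    have hgauss : (∑ j ∈ Finset.range m, j) * 2 = m * (m - 1) := Finset.sum_range_id_mul_two m
    -- 2N = p * (m * (m-1)) + 2m
    have h2N : 2 * N = p * (m * (m - 1)) + 2 * m := by
      rw [hN]; rw [← hgauss]; ring
    rw [hc, hnm] at h2N
    -- p * m * c * 2 = p * (m * (m-1)) + 2 * m
    -- divide by m :  p * (2*c) = p * (m-1) + 2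
    have hcancel : m * (p * (2 * c)) = m * (p * (m - 1) + 2) := by ring_nf; ring_nf at h2N; nlinarith [h2N]
    have heq : p * (2 * c) = p * (m - 1) + 2 := Nat.eq_of_mul_eq_mul_left hm0 hcancel
    have hlt : m - 1 < 2 * c := by
      by_contra hcon
      push_neg at hcon
      have := Nat.mul_le_mul_left p hcon
      omega
    have : p * (m - 1 + 1) ≤ p * (2 * c) := Nat.mul_le_mul_left p hlt
    rw [Nat.mul_succ] at this
    omega
  have hs0 : wsS X ≠ 0 := by
    rw [hsum]
    rw [Ne, ZMod.natCast_eq_zero_iff]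
    exact hnN
  have hφs : φ (wsS X) = 0 := by
    rw [hsum, map_natCast]
    rw [ZMod.natCast_eq_zero_iff]
    exact hpN
  have hfX : wsF X = false := by
    rw [wsF]
    have : φ (wsS X) ≠ 1 := by rw [hφs]; exact zero_ne_one
    simpa [hX] using this
  -- flip formula
  have hflip : ∀ (i : ZMod n) (b : Bool), wsS (Function.update X i b)
      = wsS X + (if b then i else 0) - (if X i then i else 0) := by
    intro i b
    set F : ZMod n → ZMod n := fun j => if X j then j else 0 with hF
    have hfun : (fun j => if Function.update X i b j then j else 0)
        = Function.update F i (if b then i else 0) := by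
      ext j
      rcases eq_or_ne j i with rfl | hj
      · simp [hF]
      · simp [hF, Function.update_of_ne hj]
    have base : ∑ j : ZMod n, F j = F i + ∑ j ∈ Finset.univ \ {i}, F j := by
      conv_lhs => rw [← Function.update_eq_self i F]
      exact Finset.sum_update_of_mem (Finset.mem_univ i) F (F i)
    have hws : wsS X = ∑ j : ZMod n, F j := rfl
    rw [wsS, hfun, Finset.sum_update_of_mem (Finset.mem_univ i) F _]
    rw [hws, base, hF]
    ring
  -- main argument: no coordinate is sensitive
  rw [wsSens, Finset.card_eq_zero, Finset.filter_eq_empty_iff]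
  intro i _
  simp only [ne_eq, not_not]
  rw [hfX]
  cases hXi : X i with
  | false =>
      have hs' : wsS (Function.update X i (!false)) = wsS X + i := by
        rw [hflip i (!false), hXi]
        simp
      rw [wsF, hs']
      have hne : wsS X + i ≠ i := fun h => hs0 (by
        have := add_right_cancel (b := i) (a := wsS X) (c := 0) (by rw [zero_add]; exact h)
        exact this)
      rw [Function.update_of_ne hne]
      have hφval : φ (wsS X + i) = φ i := by rw [map_add, hφs, zero_add]
      have hXine : φ i ≠ 1 := by
        intro h
        rw [hX] at hXi
        simp only [decide_eq_false_iff_not] at hXi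
        exact hXi h
      rw [hX]
      simp only [decide_eq_false_iff_not]
      rw [hφval]
      exact hXine
  | true =>
      have hs' : wsS (Function.update X i (!true)) = wsS X - i := by
        rw [hflip i (!true), hXi]
        simp
      rw [wsF, hs']
      rcases eq_or_ne (wsS X - i) i with heq | hne
      · rw [heq, Function.update_self]
        rfl
      · rw [Function.update_of_ne hne]
        have hXitrue : φ i = 1 := by
          rw [hX] at hXi
          simpa using hXi
        have hφval : φ (wsS X - i) = -1 := by
          rw [map_sub, hφs, hXitrue, zero_sub]
        have hneg : (-1 : ZMod p) ≠ 1 := by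
          intro h
          have h2 : ((2 : ℕ) : ZMod p) = 0 := by push_cast; linear_combination -h
          rw [ZMod.natCast_eq_zero_iff] at h2
          have := Nat.le_of_dvd (by norm_num) h2
          omega
        rw [hX]
        simp only [decide_eq_false_iff_not]
        rw [hφval]
        exact hneg
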